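/- Under the hypotheses of the non-smooth recovery theorem, if additionally inf_w f(w) > -∞ (so that 0 ∈ dom f*), then ‖x̂¹ - x*‖ ≤ √6·(L/λ)·Z_f. -/

import Mathlib

open scoped RealInnerProductSpace
open Matrix MeasureTheory ProbabilityTheory

noncomputable section

abbrev EuclR (n : ℕ) := EuclideanSpace ℝ (Fin n)

def matVec {p q : ℕ} (M : Matrix (Fin p) (Fin q) ℝ) (x : EuclR q) : EuclR p :=
  Matrix.toEuclideanLin M x

def matCLM {p q : ℕ} (M : Matrix (Fin p) (Fin q) ℝ) : EuclR q →L[ℝ] EuclR p :=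
  LinearMap.toContinuousLinearMap (Matrix.toEuclideanLin M)

def ranM {p q : ℕ} (M : Matrix (Fin p) (Fin q) ℝ) : Submodule ℝ (EuclR p) :=
  LinearMap.range (Matrix.toEuclideanLin M)

def projOn {p : ℕ} (K : Submodule ℝ (EuclR p)) (x : EuclR p) : EuclR p :=
  (K.orthogonalProjection x : EuclR p)

def perpCLM {p : ℕ} (K : Submodule ℝ (EuclR p)) : EuclR p →L[ℝ] EuclR p :=
  ContinuousLinearMap.id ℝ (EuclR p) - K.subtypeL.comp (K.orthogonalProjection)

def fconj {p : ℕ} (f : EuclR p → ℝ) (z : EuclR p) : EReal :=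
  ⨆ w : EuclR p, ((⟪w, z⟫ - f w : ℝ) : EReal)

def fdom {p : ℕ} (f : EuclR p → ℝ) : Set (EuclR p) := {z | fconj f z ≠ ⊤}

def tcone {p : ℕ} (f : EuclR p → ℝ) (z : EuclR p) : Set (EuclR p) :=
  {Δ | ∃ t : ℝ, 0 ≤ t ∧ ∃ y ∈ fdom f, Δ = t • (y - z)}

def ZfVal {n d m : ℕ} (f : EuclR n → ℝ) (zs : EuclR n)
    (A : Matrix (Fin n) (Fin d) ℝ) (S : Matrix (Fin d) (Fin m) ℝ) : ℝ :=
  sSup ((fun Δ => ‖matVec Aᵀ Δ - projOn (ranM S) (matVec Aᵀ Δ)‖) ''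
    (tcone f zs ∩ Metric.closedBall 0 1))

/- ## Auxiliary lemmas -/

lemma term_le_fconj {p : ℕ} (f : EuclR p → ℝ) (z w : EuclR p) :
    ((⟪w, z⟫ - f w : ℝ) : EReal) ≤ fconj f z := by
  rw [fconj]; exact le_iSup (fun w => ((⟪w, z⟫ - f w : ℝ) : EReal)) w

lemma fconj_ne_bot {p : ℕ} (f : EuclR p → ℝ) (z : EuclR p) : fconj f z ≠ ⊥ := by
  intro hb
  have h := term_le_fconj f z 0
  rw [hb, le_bot_iff] at h
  exact (EReal.coe_ne_bot _) h

lemma fconj_eq_real {p : ℕ} (f : EuclR p → ℝ) (z : EuclR p) (h : fconj f z ≠ ⊤) :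
    ∃ c : ℝ, fconj f z = (c : EReal) :=
  ⟨(fconj f z).toReal, (EReal.coe_toReal h (fconj_ne_bot f z)).symm⟩

lemma fconj_zero_le {p : ℕ} (f : EuclR p → ℝ) (B : ℝ) (hB : ∀ w, B ≤ f w) :
    fconj f 0 ≤ ((-B : ℝ) : EReal) := by
  rw [fconj]
  refine iSup_le fun w => ?_
  have : (⟪w, (0:EuclR p)⟫ - f w : ℝ) ≤ -B := by
    rw [inner_zero_right]; linarith [hB w]
  exact_mod_cast this

lemma fconj_ne_top_of_le {p : ℕ} (f : EuclR p → ℝ) (z : EuclR p) (q c : ℝ)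
    (h : fconj f z + ((q : ℝ) : EReal) ≤ ((c : ℝ) : EReal)) : fconj f z ≠ ⊤ := by
  intro ht
  rw [ht, EReal.top_add_coe] at h
  exact (EReal.coe_lt_top c).not_ge h

lemma norm_le_of_fconj_real {p : ℕ} (f : EuclR p → ℝ) (L : ℝ) (hL : 0 ≤ L)
    (hLip : ∀ x y, |f x - f y| ≤ L * ‖x - y‖) (z : EuclR p) (c : ℝ)
    (h : fconj f z = (c : EReal)) : ‖z‖ ≤ L := by
  by_contra hgt
  push_neg at hgt
  have key : ∀ t : ℝ, 0 ≤ t → t * (‖z‖ ^ 2 - L * ‖z‖) ≤ c + f 0 := by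
    intro t ht
    have h1 : ((⟪t • z, z⟫ - f (t • z) : ℝ) : EReal) ≤ (c : EReal) := h ▸ term_le_fconj f z (t • z)
    have h1' : (⟪t • z, z⟫ - f (t • z) : ℝ) ≤ c := by exact_mod_cast h1
    have h2 : ⟪t • z, z⟫ = t * ‖z‖ ^ 2 := by
      rw [real_inner_smul_left, real_inner_self_eq_norm_sq]
    have h3 : |f (t • z) - f 0| ≤ L * (t * ‖z‖) := by
      have := hLip (t • z) 0
      rwa [sub_zero, norm_smul, Real.norm_eq_abs, abs_of_nonneg ht] at this
    have h4 : f (t • z) ≤ f 0 + L * (t * ‖z‖) := by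
      have := abs_le.mp h3; linarith [this.2]
    rw [h2] at h1'
    nlinarith
  have hd : 0 < ‖z‖ ^ 2 - L * ‖z‖ := by nlinarith [norm_nonneg z, hgt, hL]
  have := key ((|c + f 0| + 1) / (‖z‖ ^ 2 - L * ‖z‖)) (by positivity)
  rw [div_mul_cancel₀ _ (ne_of_gt hd)] at this
  have := abs_nonneg (c + f 0)
  have := le_abs_self (c + f 0)
  linarith

lemma fconj_combo_le {p : ℕ} (f : EuclR p → ℝ) (a b : EuclR p) (ca cb : ℝ)
    (ha : fconj f a = (ca : EReal)) (hb : fconj f b = (cb : EReal))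
    (t : ℝ) (ht0 : 0 ≤ t) (ht1 : t ≤ 1) :
    fconj f ((1 - t) • a + t • b) ≤ (((1 - t) * ca + t * cb : ℝ) : EReal) := by
  rw [fconj]
  refine iSup_le fun w => ?_
  have hwa : (⟪w, a⟫ - f w : ℝ) ≤ ca := by
    have := term_le_fconj f a w; rw [ha] at this; exact_mod_cast this
  have hwb : (⟪w, b⟫ - f w : ℝ) ≤ cb := by
    have := term_le_fconj f b w; rw [hb] at this; exact_mod_cast this
  have hins : ⟪w, (1 - t) • a + t • b⟫ = (1 - t) * ⟪w, a⟫ + t * ⟪w, b⟫ := by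
    rw [inner_add_right, real_inner_smul_right, real_inner_smul_right]
  have : (⟪w, (1 - t) • a + t • b⟫ - f w : ℝ) ≤ (1 - t) * ca + t * cb := by
    rw [hins]; nlinarith
  exact_mod_cast this

lemma projOn_smul {p : ℕ} (K : Submodule ℝ (EuclR p)) (s : ℝ) (x : EuclR p) :
    projOn K (s • x) = s • projOn K x := by
  simp [projOn, _root_.map_smul]

lemma projOn_add {p : ℕ} (K : Submodule ℝ (EuclR p)) (x y : EuclR p) :
    projOn K (x + y) = projOn K x + projOn K y := by
  simp [projOn, map_add]

lemma matVec_smul {p q : ℕ} (M : Matrix (Fin p) (Fin q) ℝ) (s : ℝ) (x : EuclR q) :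
    matVec M (s • x) = s • matVec M x := by simp [matVec, _root_.map_smul]

lemma matVec_add {p q : ℕ} (M : Matrix (Fin p) (Fin q) ℝ) (x y : EuclR q) :
    matVec M (x + y) = matVec M x + matVec M y := by simp [matVec, map_add]

lemma matVec_sub {p q : ℕ} (M : Matrix (Fin p) (Fin q) ℝ) (x y : EuclR q) :
    matVec M (x - y) = matVec M x - matVec M y := by simp [matVec, map_sub]

lemma tcone_smul' {p : ℕ} (f : EuclR p → ℝ) (z w : EuclR p) (s : ℝ) (hs : 0 ≤ s)
    (hw : w ∈ tcone f z) : s • w ∈ tcone f z := by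
  obtain ⟨t, ht, y, hy, rfl⟩ := hw
  exact ⟨s * t, mul_nonneg hs ht, y, hy, smul_smul s t _⟩

lemma proj_inner_perp {p : ℕ} (K : Submodule ℝ (EuclR p)) (x y : EuclR p) (hy : y ∈ K) :
    ⟪y, x - projOn K x⟫ = 0 :=
  Submodule.sub_starProjection_mem_orthogonal (K := K) x y hy

lemma proj_pyth {p : ℕ} (K : Submodule ℝ (EuclR p)) (x : EuclR p) :
    ‖x‖ ^ 2 = ‖projOn K x‖ ^ 2 + ‖x - projOn K x‖ ^ 2 := by
  have h0 : ⟪projOn K x, x - projOn K x⟫ = 0 :=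
    proj_inner_perp K x _ (Submodule.coe_mem _)
  have hx : x = projOn K x + (x - projOn K x) := by abel
  calc ‖x‖ ^ 2 = ‖projOn K x + (x - projOn K x)‖ ^ 2 := by rw [← hx]
    _ = _ := by rw [norm_add_sq_real, h0]; ring

lemma norm_sub_proj_le {p : ℕ} (K : Submodule ℝ (EuclR p)) (x : EuclR p) :
    ‖x - projOn K x‖ ≤ ‖x‖ := by
  have := proj_pyth K x
  nlinarith [norm_nonneg x, norm_nonneg (x - projOn K x), norm_nonneg (projOn K x)]

lemma zf_bddAbove {n d m : ℕ} (f : EuclR n → ℝ) (zs : EuclR n)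
    (A : Matrix (Fin n) (Fin d) ℝ) (S : Matrix (Fin d) (Fin m) ℝ) :
    BddAbove ((fun Δ => ‖matVec Aᵀ Δ - projOn (ranM S) (matVec Aᵀ Δ)‖) ''
      (tcone f zs ∩ Metric.closedBall 0 1)) := by
  refine ⟨‖matCLM Aᵀ‖, fun x hx => ?_⟩
  obtain ⟨Δ, hΔ, rfl⟩ := hx
  have hΔ1 : ‖Δ‖ ≤ 1 := by
    have := hΔ.2; rwa [Metric.mem_closedBall, dist_zero_right] at this
  calc ‖matVec Aᵀ Δ - projOn (ranM S) (matVec Aᵀ Δ)‖ ≤ ‖matVec Aᵀ Δ‖ :=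
        norm_sub_proj_le _ _
    _ = ‖matCLM Aᵀ Δ‖ := rfl
    _ ≤ ‖matCLM Aᵀ‖ * ‖Δ‖ := (matCLM Aᵀ).le_opNorm Δ
    _ ≤ ‖matCLM Aᵀ‖ * 1 := by
        have := norm_nonneg (matCLM Aᵀ); nlinarith
    _ = ‖matCLM Aᵀ‖ := mul_one _

lemma zf_bound {n d m : ℕ} (f : EuclR n → ℝ) (zs : EuclR n)
    (A : Matrix (Fin n) (Fin d) ℝ) (S : Matrix (Fin d) (Fin m) ℝ)
    (w : EuclR n) (r : ℝ) (hw : w ∈ tcone f zs) (hr : ‖w‖ ≤ r) :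
    ‖matVec Aᵀ w - projOn (ranM S) (matVec Aᵀ w)‖ ≤ r * ZfVal f zs A S := by
  rcases eq_or_lt_of_le (norm_nonneg w |>.trans hr) with hr0 | hr0
  · have hw0 : w = 0 := norm_le_zero_iff.mp (hr0 ▸ hr)
    subst hw0
    rw [← hr0, zero_mul]
    simp [matVec, projOn]
  · have hmem : (1 / r) • w ∈ tcone f zs ∩ Metric.closedBall 0 1 := by
      constructor
      · exact tcone_smul' f zs w (1 / r) (by positivity) hw
      · rw [Metric.mem_closedBall, dist_zero_right, norm_smul, Real.norm_eq_abs,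
          abs_of_nonneg (by positivity : (0:ℝ) ≤ 1 / r)]
        rw [div_mul_eq_mul_div, one_mul, div_le_one hr0]
        exact hr
    have hle : ‖matVec Aᵀ ((1 / r) • w) - projOn (ranM S) (matVec Aᵀ ((1 / r) • w))‖
        ≤ ZfVal f zs A S := le_csSup (zf_bddAbove f zs A S) ⟨_, hmem, rfl⟩
    rw [matVec_smul, projOn_smul, ← smul_sub, norm_smul, Real.norm_eq_abs,
      abs_of_nonneg (by positivity : (0:ℝ) ≤ 1 / r)] at hle
    calc ‖matVec Aᵀ w - projOn (ranM S) (matVec Aᵀ w)‖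
        = r * (1 / r * ‖matVec Aᵀ w - projOn (ranM S) (matVec Aᵀ w)‖) := by
          field_simp
      _ ≤ r * ZfVal f zs A S := mul_le_mul_of_nonneg_left hle hr0.le

lemma limit_nonneg (c Kk : ℝ) (hK : 0 ≤ Kk)
    (h : ∀ t : ℝ, 0 < t → t ≤ 1 → 0 ≤ c + t * Kk) : 0 ≤ c := by
  by_contra hc
  push_neg at hc
  have h1 : (0:ℝ) < min 1 (-c / (2 * (Kk + 1))) := lt_min one_pos (div_pos (by linarith) (by positivity))
  have h2 : min 1 (-c / (2 * (Kk + 1))) ≤ 1 := min_le_left _ _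
  have h3 : min 1 (-c / (2 * (Kk + 1))) ≤ -c / (2 * (Kk + 1)) := min_le_right _ _
  have h4 := h _ h1 h2
  have h5 : min 1 (-c / (2 * (Kk + 1))) * Kk ≤ (-c / (2 * (Kk + 1))) * Kk :=
    mul_le_mul_of_nonneg_right h3 hK
  have h6 : (-c / (2 * (Kk + 1))) * Kk ≤ -c / 2 := by
    rw [div_mul_eq_mul_div, div_le_div_iff₀ (by positivity) two_pos]
    nlinarith
  linarith

set_option maxHeartbeats 1600000 in
/-- improved non-smooth recovery bound when f is bounded below. -/
theorem nonsmooth_recovery_bddBelow (n d m : ℕ) (f : EuclR n → ℝ)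
    (hconv : ConvexOn ℝ Set.univ f) (L lam : ℝ) (hL : 0 ≤ L) (hlam : 0 < lam)
    (hLip : ∀ x y, |f x - f y| ≤ L * ‖x - y‖)
    (hbdd : BddBelow (Set.range f))
    (A : Matrix (Fin n) (Fin d) ℝ) (S : Matrix (Fin d) (Fin m) ℝ)
    (zs ys : EuclR n)
    (hzs : ∀ z, fconj f zs + ((1 / (2 * lam) * ‖matVec Aᵀ zs‖ ^ 2 : ℝ) : EReal)
        ≤ fconj f z + ((1 / (2 * lam) * ‖matVec Aᵀ z‖ ^ 2 : ℝ) : EReal))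
    (hys : ∀ y, fconj f ys + ((1 / (2 * lam) * ‖projOn (ranM S) (matVec Aᵀ ys)‖ ^ 2 : ℝ) : EReal)
        ≤ fconj f y + ((1 / (2 * lam) * ‖projOn (ranM S) (matVec Aᵀ y)‖ ^ 2 : ℝ) : EReal))
    (xs x1 : EuclR d)
    (hxs : xs = (-(1 / lam)) • matVec Aᵀ zs)
    (hx1 : x1 = (-(1 / lam)) • matVec Aᵀ ys) :
    ‖x1 - xs‖ ≤ Real.sqrt 6 * (L / lam) * ZfVal f zs A S := by
  classical
  obtain ⟨B, hB⟩ := hbdd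
  have hB' : ∀ w, B ≤ f w := fun w => hB ⟨w, rfl⟩
  have h0le : fconj f 0 ≤ ((-B : ℝ) : EReal) := fconj_zero_le f B hB'
  have h0dom : fconj f 0 ≠ ⊤ := fun h => by
    rw [h] at h0le; exact (EReal.coe_lt_top _).not_ge h0le
  -- finiteness of fconj at zs and ys
  have hA0 : matVec Aᵀ (0 : EuclR n) = 0 := by simp [matVec]
  have hzstop : fconj f zs ≠ ⊤ := by
    refine fconj_ne_top_of_le f zs (1 / (2 * lam) * ‖matVec Aᵀ zs‖ ^ 2)
      (-B + 1 / (2 * lam) * ‖matVec Aᵀ (0 : EuclR n)‖ ^ 2) ?_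
    refine (hzs 0).trans ?_
    rw [EReal.coe_add]
    exact add_le_add_left h0le _
  have hystop : fconj f ys ≠ ⊤ := by
    refine fconj_ne_top_of_le f ys (1 / (2 * lam) * ‖projOn (ranM S) (matVec Aᵀ ys)‖ ^ 2)
      (-B + 1 / (2 * lam) * ‖projOn (ranM S) (matVec Aᵀ (0 : EuclR n))‖ ^ 2) ?_
    refine (hys 0).trans ?_
    rw [EReal.coe_add]
    exact add_le_add_left h0le _
  obtain ⟨czs, hczs⟩ := fconj_eq_real f zs hzstop
  obtain ⟨cys, hcys⟩ := fconj_eq_real f ys hystop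
  set K : Submodule ℝ (EuclR d) := ranM S with hK
  set u : EuclR d := matVec Aᵀ zs with hu
  set uy : EuclR d := matVec Aᵀ ys with huy
  set v : EuclR d := matVec Aᵀ (ys - zs) with hv
  have huyv : uy = u + v := by rw [hu, huy, hv, matVec_sub]; abel
  set pu : EuclR d := projOn K u with hpu
  set pv : EuclR d := projOn K v with hpv
  set py : EuclR d := projOn K uy with hpy
  have hpyv : py = pu + pv := by rw [hpy, huyv, projOn_add]
  set c1 : ℝ := ⟪u, v⟫ with hc1
  set c2 : ℝ := ⟪py, pv⟫ with hc2
  set Z : ℝ := ZfVal f zs A S with hZ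
  -- step I : unsketched optimality along the segment
  have hI : ∀ t : ℝ, 0 < t → t ≤ 1 →
      czs - cys ≤ (1 / lam) * c1 + t * (1 / (2 * lam)) * ‖v‖ ^ 2 := by
    intro t ht0 ht1
    set zt : EuclR n := (1 - t) • zs + t • ys with hzt
    have hzt' : zt = zs + t • (ys - zs) := by
      rw [hzt, smul_sub, sub_smul, one_smul]; abel
    have hAzt : matVec Aᵀ zt = u + t • v := by
      rw [hzt', matVec_add, matVec_smul, hu, hv]
    have hmid := fconj_combo_le f zs ys czs cys hczs hcys t ht0.le ht1
    have h := hzs zt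
    rw [hczs] at h
    have h2 : fconj f zt + ((1 / (2 * lam) * ‖matVec Aᵀ zt‖ ^ 2 : ℝ) : EReal)
        ≤ (((1 - t) * czs + t * cys : ℝ) : EReal)
          + ((1 / (2 * lam) * ‖matVec Aᵀ zt‖ ^ 2 : ℝ) : EReal) :=
      add_le_add_left hmid _
    have h3 := h.trans h2
    rw [← EReal.coe_add, ← EReal.coe_add] at h3
    have hreal : czs + 1 / (2 * lam) * ‖u‖ ^ 2
        ≤ (1 - t) * czs + t * cys + 1 / (2 * lam) * ‖matVec Aᵀ zt‖ ^ 2 := by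
      exact_mod_cast h3
    have hnorm : ‖matVec Aᵀ zt‖ ^ 2 = ‖u‖ ^ 2 + 2 * t * c1 + t ^ 2 * ‖v‖ ^ 2 := by
      rw [hAzt, norm_add_sq_real, real_inner_smul_right, norm_smul, Real.norm_eq_abs,
        abs_of_pos ht0, mul_pow, hc1]
      ring
    rw [hnorm] at hreal
    rw [← mul_le_mul_iff_right₀ ht0]
    have e1 : 1 / (2 * lam) * (‖u‖ ^ 2 + 2 * t * c1 + t ^ 2 * ‖v‖ ^ 2)
        = 1 / (2 * lam) * ‖u‖ ^ 2 + t * ((1 / lam) * c1) + t * (t * (1 / (2 * lam)) * ‖v‖ ^ 2) := by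
      field_simp
    rw [e1] at hreal
    have e2 : t * ((1 / lam) * c1 + t * (1 / (2 * lam)) * ‖v‖ ^ 2)
        = t * ((1 / lam) * c1) + t * (t * (1 / (2 * lam)) * ‖v‖ ^ 2) := by ring
    rw [e2]
    nlinarith [hreal]
  -- step II : sketched optimality along the segment
  have hII : ∀ t : ℝ, 0 < t → t ≤ 1 →
      cys - czs ≤ -(1 / lam) * c2 + t * (1 / (2 * lam)) * ‖pv‖ ^ 2 := by
    intro t ht0 ht1
    set yt : EuclR n := (1 - t) • ys + t • zs with hyt
    have hyt' : yt = ys + (-t) • (ys - zs) := by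
      rw [hyt]; module
    have hAyt : projOn K (matVec Aᵀ yt) = py + (-t) • pv := by
      rw [hyt', matVec_add, matVec_smul, projOn_add, projOn_smul, hpy, hpv, huy]
    have hmid := fconj_combo_le f ys zs cys czs hcys hczs t ht0.le ht1
    have h := hys yt
    rw [hcys] at h
    have h2 : fconj f yt + ((1 / (2 * lam) * ‖projOn (ranM S) (matVec Aᵀ yt)‖ ^ 2 : ℝ) : EReal)
        ≤ (((1 - t) * cys + t * czs : ℝ) : EReal)
          + ((1 / (2 * lam) * ‖projOn (ranM S) (matVec Aᵀ yt)‖ ^ 2 : ℝ) : EReal) :=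
      add_le_add_left hmid _
    have h3 := h.trans h2
    rw [← EReal.coe_add, ← EReal.coe_add] at h3
    have hreal : cys + 1 / (2 * lam) * ‖py‖ ^ 2
        ≤ (1 - t) * cys + t * czs + 1 / (2 * lam) * ‖projOn (ranM S) (matVec Aᵀ yt)‖ ^ 2 := by
      exact_mod_cast h3
    have hnorm : ‖projOn (ranM S) (matVec Aᵀ yt)‖ ^ 2
        = ‖py‖ ^ 2 - 2 * t * c2 + t ^ 2 * ‖pv‖ ^ 2 := by
      have : projOn (ranM S) (matVec Aᵀ yt) = py + (-t) • pv := hAyt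
      rw [this, norm_add_sq_real, real_inner_smul_right, norm_smul, Real.norm_eq_abs,
        abs_neg, abs_of_pos ht0, mul_pow, hc2]
      ring
    rw [hnorm] at hreal
    rw [← mul_le_mul_iff_right₀ ht0]
    have e1 : 1 / (2 * lam) * (‖py‖ ^ 2 - 2 * t * c2 + t ^ 2 * ‖pv‖ ^ 2)
        = 1 / (2 * lam) * ‖py‖ ^ 2 + t * (-(1 / lam) * c2) + t * (t * (1 / (2 * lam)) * ‖pv‖ ^ 2) := by
      field_simp
      ring
    rw [e1] at hreal
    have e2 : t * (-(1 / lam) * c2 + t * (1 / (2 * lam)) * ‖pv‖ ^ 2)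
        = t * (-(1 / lam) * c2) + t * (t * (1 / (2 * lam)) * ‖pv‖ ^ 2) := by ring
    rw [e2]
    nlinarith [hreal]
  -- limit t → 0⁺
  have hsum : 0 ≤ (1 / lam) * (c1 - c2) := by
    have hlim := limit_nonneg ((1 / lam) * c1 + (-(1 / lam)) * c2)
      ((1 / (2 * lam)) * (‖v‖ ^ 2 + ‖pv‖ ^ 2)) (by positivity) ?_
    · linarith [hlim]
    · intro t ht0 ht1
      have := hI t ht0 ht1
      have := hII t ht0 ht1
      nlinarith [hI t ht0 ht1, hII t ht0 ht1]
  have hc1c2 : 0 ≤ c1 - c2 := by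
    have h := mul_nonneg hlam.le hsum
    have e : lam * (1 / lam * (c1 - c2)) = c1 - c2 := by field_simp
    rw [e] at h
    exact h
  -- orthogonal decomposition
  have hcross1 : ⟪pu, v - pv⟫ = 0 := proj_inner_perp K v pu (Submodule.coe_mem _)
  have hcross2 : ⟪u - pu, pv⟫ = 0 := by
    rw [real_inner_comm]; exact proj_inner_perp K u pv (Submodule.coe_mem _)
  have hdecomp : c1 = ⟪pu, pv⟫ + ⟪u - pu, v - pv⟫ := by
    have hu' : u = pu + (u - pu) := by abel
    have hv' : v = pv + (v - pv) := by abel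
    rw [hc1]
    calc ⟪u, v⟫ = ⟪pu + (u - pu), pv + (v - pv)⟫ := by rw [← hu', ← hv']
      _ = ⟪pu, pv⟫ + ⟪u - pu, v - pv⟫ := by
          rw [inner_add_left, inner_add_right, inner_add_right, hcross1, hcross2]; ring
  have hc2' : c2 = ⟪pu, pv⟫ + ‖pv‖ ^ 2 := by
    rw [hc2, hpyv, inner_add_left, real_inner_self_eq_norm_sq]
  have hkey : ‖pv‖ ^ 2 ≤ ⟪u - pu, v - pv⟫ := by
    have := hc1c2
    rw [hdecomp, hc2'] at this
    linarith
  -- bounds via ZfVal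
  have hzsL : ‖zs‖ ≤ L := norm_le_of_fconj_real f L hL hLip zs czs hczs
  have hysL : ‖ys‖ ≤ L := norm_le_of_fconj_real f L hL hLip ys cys hcys
  have hnegzs : -zs ∈ tcone f zs := ⟨1, zero_le_one, 0, h0dom, by simp⟩
  have hdel : ys - zs ∈ tcone f zs := ⟨1, zero_le_one, ys, hystop, by rw [one_smul]⟩
  have hub : ‖u - pu‖ ≤ L * Z := by
    have hb := zf_bound f zs A S (-zs) L hnegzs (by rwa [norm_neg])
    have hA : matVec Aᵀ (-zs) = -u := by rw [hu]; simp [matVec, map_neg]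
    rw [hA] at hb
    have hp : projOn (ranM S) (-u) = -pu := by
      have : (-1 : ℝ) • u = -u := by simp
      rw [← this, projOn_smul, hpu, ← hK]; simp
    rw [hp] at hb
    have : -u - -pu = -(u - pu) := by abel
    rw [this, norm_neg] at hb
    exact hb
  have hvb : ‖v - pv‖ ≤ (2 * L) * Z := by
    have hr : ‖ys - zs‖ ≤ 2 * L := by
      have := norm_sub_le ys zs; linarith
    have hb := zf_bound f zs A S (ys - zs) (2 * L) hdel hr
    rw [← hv, ← hK, ← hpv] at hb
    exact hb
  -- Z is nonnegative
  have hZ0 : 0 ≤ Z := by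
    have hm : (0 : EuclR n) ∈ tcone f zs ∩ Metric.closedBall 0 1 :=
      ⟨⟨0, le_refl 0, 0, h0dom, by simp⟩, by simp⟩
    have hle := le_csSup (zf_bddAbove f zs A S) (Set.mem_image_of_mem _ hm)
    rw [hZ]
    rw [ZfVal]
    simpa [matVec, projOn] using hle
  -- assemble
  have hpvsq : ‖pv‖ ^ 2 ≤ (L * Z) * ((2 * L) * Z) := by
    calc ‖pv‖ ^ 2 ≤ ⟪u - pu, v - pv⟫ := hkey
      _ ≤ ‖u - pu‖ * ‖v - pv‖ := real_inner_le_norm _ _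
      _ ≤ (L * Z) * ((2 * L) * Z) := by
          apply mul_le_mul hub hvb (norm_nonneg _) (by positivity)
  have hvpyth : ‖v‖ ^ 2 = ‖pv‖ ^ 2 + ‖v - pv‖ ^ 2 := by
    have := proj_pyth K v
    rw [← hpv] at this
    exact this
  have hvsq : ‖v‖ ^ 2 ≤ 6 * (L * Z) ^ 2 := by
    nlinarith [hvb, norm_nonneg (v - pv), hpvsq, hvpyth]
  have hnn : 0 ≤ Real.sqrt 6 * (L * Z) :=
    mul_nonneg (Real.sqrt_nonneg 6) (mul_nonneg hL hZ0)
  have hvle : ‖v‖ ≤ Real.sqrt 6 * (L * Z) := by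
    have h6 : (Real.sqrt 6 * (L * Z)) ^ 2 = 6 * (L * Z) ^ 2 := by
      rw [mul_pow, Real.sq_sqrt (by norm_num : (6:ℝ) ≥ 0)]
    calc ‖v‖ = Real.sqrt (‖v‖ ^ 2) := (Real.sqrt_sq (norm_nonneg v)).symm
      _ ≤ Real.sqrt ((Real.sqrt 6 * (L * Z)) ^ 2) := Real.sqrt_le_sqrt (by rw [h6]; exact hvsq)
      _ = Real.sqrt 6 * (L * Z) := Real.sqrt_sq hnn
  have hxv : x1 - xs = (-(1 / lam)) • v := by
    rw [hx1, hxs, ← smul_sub, hv, matVec_sub]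
  rw [hxv, norm_smul, Real.norm_eq_abs, abs_neg, abs_of_pos (by positivity : (0:ℝ) < 1 / lam)]
  calc 1 / lam * ‖v‖ ≤ 1 / lam * (Real.sqrt 6 * (L * Z)) :=
        mul_le_mul_of_nonneg_left hvle (by positivity)
    _ = Real.sqrt 6 * (L / lam) * Z := by field_simp
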